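/- For the overlap graph Ov(3) (vertices 12 and 21, and six edges labeled by S_3), the cycle polytope P(Ov(3)) ⊆ ℝ^{S_3} is a 4-dimensional polytope with exactly 5 vertices, namely the normalized incidence vectors of the 5 simple cycles: the loop at 12 (edge 123), the loop at 21 (edge 321), and the four 2-cycles formed by choosing one of the edges {132, 231} from 12 to 21 and one of the edges {213, 312} from 21 to 12. -/

import Mathlib

open Filter Finset

/-- The pattern of a tuple of distinct values: the unique permutation in the same
relative order. -/
def patOf {j : ℕ} (f : Fin j → ℕ) : Equiv.Perm (Fin j) := (Tuple.sort f)⁻¹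

/-- The pattern induced by the first `k` entries of a permutation of size `k+1`.
In the overlap graph `Ov(k+1)` this is the source of the edge labeled `π`. -/
def firstPat {k : ℕ} (π : Equiv.Perm (Fin (k + 1))) : Equiv.Perm (Fin k) :=
  patOf (fun i => (π i.castSucc : ℕ))

/-- The pattern induced by the last `k` entries of a permutation of size `k+1`.
In the overlap graph `Ov(k+1)` this is the target of the edge labeled `π`. -/
def lastPat {k : ℕ} (π : Equiv.Perm (Fin (k + 1))) : Equiv.Perm (Fin k) :=
  patOf (fun i => (π i.succ : ℕ))

variable {V E : Type*}

/-- A (non-empty) closed directed walk in the directed multigraph with edge-source map `src`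
and edge-target map `tgt`: a nonempty list of edges in which the target of each edge is the
source of the next, and the target of the last edge is the source of the first. -/
def IsCycleWalk (src tgt : E → V) (c : List E) : Prop :=
  c ≠ [] ∧ c.Chain' (fun a b => tgt a = src b) ∧ c.getLast?.map tgt = c.head?.map src

/-- A simple cycle: a closed directed walk that does not repeat vertices. -/
def IsSimpleCycle (src tgt : E → V) (c : List E) : Prop :=
  IsCycleWalk src tgt c ∧ (c.map src).Nodup

/-- The normalized incidence vector `e_C` of a cycle `C`:
its coordinate at an edge `e` is (number of occurrences of `e` in `C`)/|C|. -/
noncomputable def cycleVec [DecidableEq E] (c : List E) : E → ℝ :=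
  fun e => (c.count e : ℝ) / (c.length : ℝ)

/-- The cycle polytope of a directed multigraph: the convex hull of the normalized incidence
vectors of its simple cycles. -/
noncomputable def cyclePolytope [DecidableEq E] (src tgt : E → V) : Set (E → ℝ) :=
  convexHull ℝ { x | ∃ c, IsSimpleCycle src tgt c ∧ x = cycleVec c }

/-- The permutation `123`. -/
def p123 : Equiv.Perm (Fin 3) := 1
/-- The permutation `132`. -/
def p132 : Equiv.Perm (Fin 3) :=
  Equiv.mk ![0, 2, 1] ![0, 2, 1] (by intro x; fin_cases x <;> rfl) (by intro x; fin_cases x <;> rfl)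
/-- The permutation `213`. -/
def p213 : Equiv.Perm (Fin 3) :=
  Equiv.mk ![1, 0, 2] ![1, 0, 2] (by intro x; fin_cases x <;> rfl) (by intro x; fin_cases x <;> rfl)
/-- The permutation `231`. -/
def p231 : Equiv.Perm (Fin 3) :=
  Equiv.mk ![1, 2, 0] ![2, 0, 1] (by intro x; fin_cases x <;> rfl) (by intro x; fin_cases x <;> rfl)
/-- The permutation `312`. -/
def p312 : Equiv.Perm (Fin 3) :=
  Equiv.mk ![2, 0, 1] ![1, 2, 0] (by intro x; fin_cases x <;> rfl) (by intro x; fin_cases x <;> rfl)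
/-- The permutation `321`. -/
def p321 : Equiv.Perm (Fin 3) :=
  Equiv.mk ![2, 1, 0] ![2, 1, 0] (by intro x; fin_cases x <;> rfl) (by intro x; fin_cases x <;> rfl)

/-! ### Auxiliary lemmas -/

lemma patOf_of_lt {f : Fin 2 → ℕ} (h : f 0 < f 1) : patOf f = 1 := by
  have hs : Tuple.sort f = Equiv.refl (Fin 2) := by
    rw [Tuple.sort_eq_refl_iff_monotone]
    intro a b hab
    fin_cases a <;> fin_cases b <;> simp_all <;> omega
  simp [patOf, hs]; rfl

lemma patOf_of_gt {f : Fin 2 → ℕ} (h : f 1 < f 0) : patOf f = Equiv.swap 0 1 := by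
  have hs : Equiv.swap (0 : Fin 2) 1 = Tuple.sort f := by
    rw [Tuple.eq_sort_iff]
    constructor
    · intro a b hab
      fin_cases a <;> fin_cases b <;> simp_all [Equiv.swap_apply_of_ne_of_ne] <;> omega
    · intro i j hij hf
      fin_cases i <;> fin_cases j <;> simp_all
  rw [patOf, ← hs]
  decide

lemma perm3_cases (π : Equiv.Perm (Fin 3)) :
    π = p123 ∨ π = p132 ∨ π = p213 ∨ π = p231 ∨ π = p312 ∨ π = p321 := by
  revert π; decide

lemma fp123 : firstPat p123 = 1 := patOf_of_lt (by decide)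
lemma lp123 : lastPat p123 = 1 := patOf_of_lt (by decide)
lemma fp132 : firstPat p132 = 1 := patOf_of_lt (by decide)
lemma lp132 : lastPat p132 = Equiv.swap 0 1 := patOf_of_gt (by decide)
lemma fp213 : firstPat p213 = Equiv.swap 0 1 := patOf_of_gt (by decide)
lemma lp213 : lastPat p213 = 1 := patOf_of_lt (by decide)
lemma fp231 : firstPat p231 = 1 := patOf_of_lt (by decide)
lemma lp231 : lastPat p231 = Equiv.swap 0 1 := patOf_of_gt (by decide)
lemma fp312 : firstPat p312 = Equiv.swap 0 1 := patOf_of_gt (by decide)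
lemma lp312 : lastPat p312 = 1 := patOf_of_lt (by decide)
lemma fp321 : firstPat p321 = Equiv.swap 0 1 := patOf_of_gt (by decide)
lemma lp321 : lastPat p321 = Equiv.swap 0 1 := patOf_of_gt (by decide)

lemma cv1_eval {E : Type*} [DecidableEq E] (a e : E) :
    cycleVec [a] e = if a = e then 1 else 0 := by
  by_cases h1 : a = e <;> simp [cycleVec, List.count_singleton', h1, eq_comm]

lemma cv2_eval {E : Type*} [DecidableEq E] (a b e : E) :
    cycleVec [a, b] e = ((if a = e then (1:ℝ) else 0) + (if b = e then 1 else 0)) / 2 := by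
  simp only [cycleVec, List.count_cons, List.count_nil, List.length_cons, List.length_nil,
    beq_iff_eq, Nat.cast_add, Nat.cast_ite, Nat.cast_one, Nat.cast_zero, Nat.cast_ofNat]
  ring

lemma cycleVec_pair_comm {E : Type*} [DecidableEq E] (a b : E) :
    cycleVec [a, b] = cycleVec [b, a] := by
  funext e; rw [cv2_eval, cv2_eval]; ring

/-- The six vertices of the cycle polytope of `Ov(3)`. -/
noncomputable def ovT : Set (Equiv.Perm (Fin 3) → ℝ) :=
  {cycleVec [p123], cycleVec [p321],
    cycleVec [p132, p213], cycleVec [p132, p312],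
    cycleVec [p231, p213], cycleVec [p231, p312]}

lemma simple_loop {a : Equiv.Perm (Fin 3)} (h : lastPat a = firstPat a) :
    IsSimpleCycle (firstPat (k := 2)) lastPat [a] :=
  ⟨⟨by simp, by simp [List.Chain'], by simp [h]⟩, by simp⟩

lemma simple_pair {a b : Equiv.Perm (Fin 3)} (h1 : lastPat a = firstPat b)
    (h2 : lastPat b = firstPat a) (h3 : firstPat a ≠ firstPat b) :
    IsSimpleCycle (firstPat (k := 2)) lastPat [a, b] :=
  ⟨⟨by simp, by simp [List.Chain', List.isChain_pair, h1], by simp [h2]⟩, by simp [h3]⟩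

lemma cycles_eq :
    { x | ∃ c, IsSimpleCycle (firstPat (k := 2)) lastPat c ∧ x = cycleVec c } = ovT := by
  ext x
  constructor
  · rintro ⟨c, ⟨⟨hne, hchain, hclose⟩, hnodup⟩, rfl⟩
    have hlen2 : c.length ≤ 2 := by
      have h1 := hnodup.length_le_card
      simpa [Fintype.card_perm] using h1
    have hlen1 : 1 ≤ c.length := List.length_pos_iff.mpr hne
    rcases (by omega : c.length = 1 ∨ c.length = 2) with h | h
    · obtain ⟨a, rfl⟩ := List.length_eq_one_iff.mp h
      have hcl : lastPat a = firstPat a := by simpa using hclose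
      rcases perm3_cases a with rfl | rfl | rfl | rfl | rfl | rfl <;>
        simp only [fp123, fp132, fp213, fp231, fp312, fp321,
          lp123, lp132, lp213, lp231, lp312, lp321] at hcl <;>
        first
          | exact absurd hcl (by decide)
          | simp [ovT]
    · obtain ⟨a, b, rfl⟩ := List.length_eq_two.mp h
      have h1 := List.isChain_pair.mp hchain
      have h2 : lastPat b = firstPat a := by simpa using hclose
      have h3 : firstPat a ≠ firstPat b := by simpa using hnodup
      rcases perm3_cases a with rfl | rfl | rfl | rfl | rfl | rfl <;>
        rcases perm3_cases b with rfl | rfl | rfl | rfl | rfl | rfl <;>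
        simp only [fp123, fp132, fp213, fp231, fp312, fp321,
          lp123, lp132, lp213, lp231, lp312, lp321] at h1 h2 h3 <;>
        first
          | exact absurd h1 (by decide)
          | exact absurd h2 (by decide)
          | exact absurd rfl h3
          | (simp [ovT]; done)
          | (rw [cycleVec_pair_comm]; simp [ovT]; done)
  · intro hx
    simp only [ovT, Set.mem_insert_iff, Set.mem_singleton_iff] at hx
    rcases hx with rfl | rfl | rfl | rfl | rfl | rfl
    · exact ⟨_, simple_loop (by rw [fp123, lp123]), rfl⟩
    · exact ⟨_, simple_loop (by rw [fp321, lp321]), rfl⟩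
    · exact ⟨_, simple_pair (by rw [lp132, fp213]) (by rw [lp213, fp132])
        (by rw [fp132, fp213]; decide), rfl⟩
    · exact ⟨_, simple_pair (by rw [lp132, fp312]) (by rw [lp312, fp132])
        (by rw [fp132, fp312]; decide), rfl⟩
    · exact ⟨_, simple_pair (by rw [lp231, fp213]) (by rw [lp213, fp231])
        (by rw [fp231, fp213]; decide), rfl⟩
    · exact ⟨_, simple_pair (by rw [lp231, fp312]) (by rw [lp312, fp231])
        (by rw [fp231, fp312]; decide), rfl⟩

/-- A separation criterion for extreme points of a convex hull. -/
lemma mem_extremePoints_of_linear {X : Type*} [AddCommGroup X] [Module ℝ X]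
    [NoZeroSMulDivisors ℝ X] {T : Set X} {x : X} (hx : x ∈ T) (hne : (T \ {x}).Nonempty)
    (l : X →ₗ[ℝ] ℝ) (c : ℝ) (hc : c < l x) (h : ∀ y ∈ T, y ≠ x → l y ≤ c) :
    x ∈ Set.extremePoints ℝ (convexHull ℝ T) := by
  have hhull : convexHull ℝ (T \ {x}) ⊆ { w | l w ≤ c } :=
    convexHull_min (fun y hy => h y hy.1 hy.2) (convex_halfSpace_le (LinearMap.isLinear l) c)
  have key : ∀ y ∈ convexHull ℝ T, l y ≤ l x ∧ (l y = l x → y = x) := by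
    intro y hy
    have hT : insert x (T \ {x}) = T := by
      rw [Set.insert_diff_singleton, Set.insert_eq_of_mem hx]
    rw [← hT, convexHull_insert hne, mem_convexJoin] at hy
    obtain ⟨a, ha, z, hz, hseg⟩ := hy
    rw [Set.mem_singleton_iff] at ha
    rw [ha] at hseg
    obtain ⟨s, t, hs, ht, hst, rfl⟩ := hseg
    have hlz : l z ≤ c := hhull hz
    have hexp : l (s • x + t • z) = s * l x + t * l z := by
      simp [map_add, map_smul, smul_eq_mul]
    have hxx : s * l x + t * l x = l x := by rw [← add_mul, hst, one_mul]
    have hm : t * l z ≤ t * l x := mul_le_mul_of_nonneg_left (by linarith) ht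
    constructor
    · rw [hexp]; linarith
    · intro heq
      rw [hexp] at heq
      have ht0 : t ≤ 0 := by
        by_contra ht'
        push_neg at ht'
        have hp := mul_pos ht' (show (0:ℝ) < l x - l z by linarith)
        have he : t * (l x - l z) = t * l x - t * l z := by ring
        linarith
      have ht0' : t = 0 := le_antisymm ht0 ht
      subst ht0'
      have hs1 : s = 1 := by linarith
      simp [hs1]
  refine mem_extremePoints_iff_forall_segment.mpr ⟨subset_convexHull ℝ T hx, ?_⟩
  intro x1 h1 x2 h2 hseg
  obtain ⟨s, t, hs, ht, hst, hsum⟩ := hseg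
  have k1 := key x1 h1
  have k2 := key x2 h2
  have hl : s * l x1 + t * l x2 = l x := by
    rw [← hsum]; simp [map_add, map_smul, smul_eq_mul]
  rcases eq_or_lt_of_le hs with hs0 | hs0
  · right
    have ht1 : t = 1 := by linarith
    rw [← hsum, ← hs0, ht1]
    simp
  · left
    have hle : l x ≤ l x1 := by
      by_contra hlt
      push_neg at hlt
      have hp1 : 0 < s * (l x - l x1) := mul_pos hs0 (by linarith)
      have hp2 : 0 ≤ t * (l x - l x2) := mul_nonneg ht (by linarith [k2.1])
      have he1 : s * (l x - l x1) = s * l x - s * l x1 := by ring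
      have he2 : t * (l x - l x2) = t * l x - t * l x2 := by ring
      have hxx : s * l x + t * l x = l x := by rw [← add_mul, hst, one_mul]
      linarith
    exact k1.2 (le_antisymm k1.1 hle)

/-- Coordinate projection as a linear functional. -/
noncomputable def projP (a : Equiv.Perm (Fin 3)) : (Equiv.Perm (Fin 3) → ℝ) →ₗ[ℝ] ℝ :=
  LinearMap.proj a

lemma projP_apply (a : Equiv.Perm (Fin 3)) (f : Equiv.Perm (Fin 3) → ℝ) : projP a f = f a := rfl

lemma ovT_sub : ∀ x ∈ ovT, x ∈ Set.extremePoints ℝ (convexHull ℝ ovT) := by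
  have hmem : ∀ y ∈ ({cycleVec [p123], cycleVec [p321],
      cycleVec [p132, p213], cycleVec [p132, p312],
      cycleVec [p231, p213], cycleVec [p231, p312]} : Set (Equiv.Perm (Fin 3) → ℝ)), y ∈ ovT :=
    fun y hy => hy
  have hval1 : cycleVec [p123] p123 = 1 := by
    simp (config := { decide := true }) [cv1_eval]
  have hval2 : cycleVec [p321] p123 = 0 := by
    simp (config := { decide := true }) [cv1_eval]
  intro x hx
  simp only [ovT, Set.mem_insert_iff, Set.mem_singleton_iff] at hx
  rcases hx with rfl | rfl | rfl | rfl | rfl | rfl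
  · refine mem_extremePoints_of_linear (by simp [ovT])
      ⟨cycleVec [p321], by simp [ovT], fun hh => by
        rw [Set.mem_singleton_iff] at hh
        have := congrFun hh p123
        rw [hval1, hval2] at this; norm_num at this⟩
      (projP p123) 0 ?_ ?_
    · rw [projP_apply, hval1]; norm_num
    · intro y hy hyne
      simp only [ovT, Set.mem_insert_iff, Set.mem_singleton_iff] at hy
      rcases hy with rfl | rfl | rfl | rfl | rfl | rfl <;>
        first
          | exact absurd rfl hyne
          | (simp (config := { decide := true }) [projP_apply, LinearMap.add_apply, cv1_eval, cv2_eval])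
  · refine mem_extremePoints_of_linear (by simp [ovT])
      ⟨cycleVec [p123], by simp [ovT], fun hh => by
        rw [Set.mem_singleton_iff] at hh
        have := congrFun hh p123
        rw [hval1, hval2] at this; norm_num at this⟩
      (projP p321) 0 ?_ ?_
    · rw [projP_apply]
      simp (config := { decide := true }) [cv1_eval]
    · intro y hy hyne
      simp only [ovT, Set.mem_insert_iff, Set.mem_singleton_iff] at hy
      rcases hy with rfl | rfl | rfl | rfl | rfl | rfl <;>
        first
          | exact absurd rfl hyne
          | (simp (config := { decide := true }) [projP_apply, LinearMap.add_apply, cv1_eval, cv2_eval])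
  · refine mem_extremePoints_of_linear (by simp [ovT])
      ⟨cycleVec [p123], by simp [ovT], fun hh => by
        rw [Set.mem_singleton_iff] at hh
        have := congrFun hh p123
        rw [hval1] at this
        simp (config := { decide := true }) [cv2_eval] at this⟩
      (projP p132 + projP p213) (1/2) ?_ ?_
    · simp (config := { decide := true }) [projP_apply, LinearMap.add_apply, cv2_eval]
      try norm_num
    · intro y hy hyne
      simp only [ovT, Set.mem_insert_iff, Set.mem_singleton_iff] at hy
      rcases hy with rfl | rfl | rfl | rfl | rfl | rfl <;>
        first
          | exact absurd rfl hyne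
          | (simp (config := { decide := true }) [projP_apply, LinearMap.add_apply, cv1_eval, cv2_eval]
             try norm_num)
  · refine mem_extremePoints_of_linear (by simp [ovT])
      ⟨cycleVec [p123], by simp [ovT], fun hh => by
        rw [Set.mem_singleton_iff] at hh
        have := congrFun hh p123
        rw [hval1] at this
        simp (config := { decide := true }) [cv2_eval] at this⟩
      (projP p132 + projP p312) (1/2) ?_ ?_
    · simp (config := { decide := true }) [projP_apply, LinearMap.add_apply, cv2_eval]
      try norm_num
    · intro y hy hyne
      simp only [ovT, Set.mem_insert_iff, Set.mem_singleton_iff] at hy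
      rcases hy with rfl | rfl | rfl | rfl | rfl | rfl <;>
        first
          | exact absurd rfl hyne
          | (simp (config := { decide := true }) [projP_apply, LinearMap.add_apply, cv1_eval, cv2_eval]
             try norm_num)
  · refine mem_extremePoints_of_linear (by simp [ovT])
      ⟨cycleVec [p123], by simp [ovT], fun hh => by
        rw [Set.mem_singleton_iff] at hh
        have := congrFun hh p123
        rw [hval1] at this
        simp (config := { decide := true }) [cv2_eval] at this⟩
      (projP p231 + projP p213) (1/2) ?_ ?_
    · simp (config := { decide := true }) [projP_apply, LinearMap.add_apply, cv2_eval]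
      try norm_num
    · intro y hy hyne
      simp only [ovT, Set.mem_insert_iff, Set.mem_singleton_iff] at hy
      rcases hy with rfl | rfl | rfl | rfl | rfl | rfl <;>
        first
          | exact absurd rfl hyne
          | (simp (config := { decide := true }) [projP_apply, LinearMap.add_apply, cv1_eval, cv2_eval]
             try norm_num)
  · refine mem_extremePoints_of_linear (by simp [ovT])
      ⟨cycleVec [p123], by simp [ovT], fun hh => by
        rw [Set.mem_singleton_iff] at hh
        have := congrFun hh p123
        rw [hval1] at this
        simp (config := { decide := true }) [cv2_eval] at this⟩
      (projP p231 + projP p312) (1/2) ?_ ?_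
    · simp (config := { decide := true }) [projP_apply, LinearMap.add_apply, cv2_eval]
      try norm_num
    · intro y hy hyne
      simp only [ovT, Set.mem_insert_iff, Set.mem_singleton_iff] at hy
      rcases hy with rfl | rfl | rfl | rfl | rfl | rfl <;>
        first
          | exact absurd rfl hyne
          | (simp (config := { decide := true }) [projP_apply, LinearMap.add_apply, cv1_eval, cv2_eval]
             try norm_num)

/-- The four difference vectors spanning the direction of the affine span. -/
noncomputable def ovD : Fin 4 → (Equiv.Perm (Fin 3) → ℝ) :=
  ![cycleVec [p321] - cycleVec [p123],
    cycleVec [p132, p213] - cycleVec [p123],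
    cycleVec [p132, p312] - cycleVec [p123],
    cycleVec [p231, p213] - cycleVec [p123]]

lemma ovD_indep : LinearIndependent ℝ ovD := by
  rw [Fintype.linearIndependent_iff]
  intro g hg
  rw [Fin.sum_univ_four] at hg
  have e1 := congrFun hg p321
  have e2 := congrFun hg p312
  have e3 := congrFun hg p231
  have e4 := congrFun hg p132
  simp (config := { decide := true }) [ovD, Pi.add_apply, Pi.smul_apply, Pi.sub_apply,
    smul_eq_mul, cv1_eval, cv2_eval, Matrix.cons_val_zero, Matrix.cons_val_one,
    Matrix.head_cons] at e1 e2 e3 e4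
  intro i
  fin_cases i <;> simp <;> linarith

lemma ovD_span : vectorSpan ℝ ovT = Submodule.span ℝ (Set.range ovD) := by
  have hv1 : cycleVec [p123] ∈ ovT := by simp [ovT]
  rw [vectorSpan_eq_span_vsub_set_right ℝ hv1]
  apply le_antisymm
  · rw [Submodule.span_le]
    rintro w ⟨y, hy, rfl⟩
    simp only [ovT, Set.mem_insert_iff, Set.mem_singleton_iff] at hy
    rcases hy with rfl | rfl | rfl | rfl | rfl | rfl
    · simp only [vsub_self]
      exact Submodule.zero_mem _
    · exact Submodule.subset_span ⟨0, by simp [ovD, vsub_eq_sub]⟩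
    · exact Submodule.subset_span ⟨1, by simp [ovD, vsub_eq_sub]⟩
    · exact Submodule.subset_span ⟨2, by simp [ovD, vsub_eq_sub]⟩
    · exact Submodule.subset_span ⟨3, by simp [ovD, vsub_eq_sub]⟩
    · have hrel : cycleVec [p231, p312] -ᵥ cycleVec [p123]
          = ovD 2 + ovD 3 - ovD 1 := by
        funext e
        simp (config := { decide := true }) [ovD, vsub_eq_sub, Pi.add_apply, Pi.sub_apply,
          cv1_eval, cv2_eval, Matrix.cons_val_zero, Matrix.cons_val_one, Matrix.head_cons]
        by_cases h1 : p132 = e <;> by_cases h2 : p213 = e <;> by_cases h3 : p312 = e <;>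
          by_cases h4 : p231 = e <;> by_cases h5 : p123 = e <;>
          simp [h1, h2, h3, h4, h5] <;> ring
      show cycleVec [p231, p312] -ᵥ cycleVec [p123] ∈ Submodule.span ℝ (Set.range ovD)
      rw [hrel]
      exact sub_mem (add_mem (Submodule.subset_span ⟨2, rfl⟩)
        (Submodule.subset_span ⟨3, rfl⟩)) (Submodule.subset_span ⟨1, rfl⟩)
  · rw [Submodule.span_le]
    rintro w ⟨i, rfl⟩
    fin_cases i
    · exact Submodule.subset_span ⟨cycleVec [p321], by simp [ovT], by simp [ovD, vsub_eq_sub]⟩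
    · exact Submodule.subset_span ⟨cycleVec [p132, p213], by simp [ovT],
        by simp [ovD, vsub_eq_sub]⟩
    · exact Submodule.subset_span ⟨cycleVec [p132, p312], by simp [ovT],
        by simp [ovD, vsub_eq_sub]⟩
    · exact Submodule.subset_span ⟨cycleVec [p231, p213], by simp [ovT],
        by simp [ovD, vsub_eq_sub]⟩

theorem cyclePolytope_overlap3 :
    Module.finrank ℝ
        (vectorSpan ℝ (cyclePolytope (firstPat (k := 2)) lastPat)) = 4 ∧
    Set.extremePoints ℝ (cyclePolytope (firstPat (k := 2)) lastPat)
      = {cycleVec [p123], cycleVec [p321],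
          cycleVec [p132, p213], cycleVec [p132, p312],
          cycleVec [p231, p213], cycleVec [p231, p312]} := by
  have hpoly : cyclePolytope (firstPat (k := 2)) lastPat = convexHull ℝ ovT := by
    unfold cyclePolytope
    rw [cycles_eq]
  constructor
  · rw [hpoly, ← direction_affineSpan, affineSpan_convexHull, direction_affineSpan, ovD_span,
      finrank_span_eq_card ovD_indep]
    simp
  · rw [hpoly]
    apply subset_antisymm
    · exact extremePoints_convexHull_subset
    · exact ovT_sub
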